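/- For even n ≥ 6 with β_n = binom(n,2), the top coefficients of d_n(q) violate log-concavity at the last term: A_n(β_n) / A_n(β_n - 1) > A_n(β_n - 1) / A_n(β_n - 2), equivalently A_n(β_n) A_n(β_n - 2) > A_n(β_n - 1)². -/

import Mathlib

open Polynomial

/-- The q-derangement polynomial, defined by the recursion
`d_n(q) = (1+q+⋯+q^{n-1}) d_{n-1}(q) + (-1)^n q^{C(n,2)}` for `n ≥ 2`, with `d_1(q) = 0`. -/
noncomputable def dq : ℕ → Polynomial ℤ
  | 0 => 0
  | 1 => 0
  | (n + 2) =>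
      (∑ i ∈ Finset.range (n + 2), X ^ i) * dq (n + 1)
        + (-1) ^ (n + 2) * X ^ ((n + 2).choose 2)

/-- `A n k` is the coefficient of `q^k` in `d_n(q)`. -/
noncomputable def A (n k : ℕ) : ℤ := (dq n).coeff k

lemma dq_succ : ∀ (n : ℕ), 1 ≤ n →
    dq (n+1) = (∑ i ∈ Finset.range (n+1), X ^ i) * dq n
      + (-1) ^ (n+1) * X ^ ((n+1).choose 2)
  | _+1, _ => rfl

lemma choose_two_succ (n : ℕ) : (n+1).choose 2 = n.choose 2 + n := by
  induction n with
  | zero => rfl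
  | succ k ih => rw [show k+1+1 = (k+1)+1 from rfl, Nat.choose_succ_succ (k+1) 1] at *; simp [Nat.choose_one_right] at *; omega

lemma geom_natDegree (N : ℕ) : (∑ i ∈ Finset.range N, X ^ i : ℤ[X]).natDegree ≤ N - 1 := by
  apply Polynomial.natDegree_sum_le_of_forall_le
  intro i hi
  simp only [Finset.mem_range] at hi
  simpa using by omega

lemma dq_natDegree_le : ∀ n, (dq n).natDegree ≤ n.choose 2 := by
  intro n
  induction n with
  | zero => simp [dq]
  | succ m ih =>
    match m, ih with
    | 0, _ => simp [dq]
    | m+1, ih =>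
      show (dq (m+1+1)).natDegree ≤ (m+1+1).choose 2
      rw [dq_succ (m+1) (by omega)]
      apply le_trans (natDegree_add_le _ _)
      have h2 : ((-1:ℤ[X]) ^ (m+1+1) * X ^ ((m+1+1).choose 2)).natDegree ≤ (m+1+1).choose 2 := by
        apply le_trans (natDegree_mul_le)
        simp [natDegree_X_pow]
      have h1 : ((∑ i ∈ Finset.range (m+1+1), X ^ i) * dq (m+1)).natDegree ≤ (m+1+1).choose 2 := by
        apply le_trans (natDegree_mul_le)
        have hs := geom_natDegree (m+1+1)
        have := choose_two_succ (m+1)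
        omega
      omega

lemma dq_coeff_eq_zero (n k : ℕ) (h : n.choose 2 < k) : (dq n).coeff k = 0 :=
  coeff_eq_zero_of_natDegree_lt (lt_of_le_of_lt (dq_natDegree_le n) h)

lemma choose_two_ge (n : ℕ) (h : 3 ≤ n) : 3 ≤ n.choose 2 := by
  calc 3 = Nat.choose 3 2 := rfl
    _ ≤ n.choose 2 := Nat.choose_le_choose 2 h

lemma coeff_geom_mul (N k : ℕ) (p : ℤ[X]) :
    ((∑ i ∈ Finset.range N, X ^ i) * p).coeff k
      = ∑ i ∈ Finset.range N, if i ≤ k then p.coeff (k - i) else 0 := by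
  rw [Finset.sum_mul, finset_sum_coeff]
  apply Finset.sum_congr rfl
  intro i _
  rw [mul_comm, coeff_mul_X_pow']

lemma aux_coeff (n : ℕ) (hn : 3 ≤ n) (j : ℕ) (hj : j ≤ 2) :
    ((∑ i ∈ Finset.range (n+1), X ^ i) * dq n).coeff (n.choose 2 + n - j)
      = ∑ t ∈ Finset.range (j+1), (dq n).coeff (n.choose 2 - t) := by
  have hc := choose_two_ge n hn
  rw [coeff_geom_mul]
  have h1 : ∀ i ∈ Finset.range (n+1),
      (if i ≤ n.choose 2 + n - j then (dq n).coeff (n.choose 2 + n - j - i) else 0)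
        = (dq n).coeff (n.choose 2 + n - j - i) := by
    intro i hi
    simp only [Finset.mem_range] at hi
    rw [if_pos (by omega)]
  rw [Finset.sum_congr rfl h1]
  rw [show n + 1 = (n - j) + (j + 1) by omega, Finset.sum_range_add]
  have h2 : ∑ i ∈ Finset.range (n - j), (dq n).coeff (n.choose 2 + n - j - i) = 0 := by
    apply Finset.sum_eq_zero
    intro i hi
    simp only [Finset.mem_range] at hi
    exact dq_coeff_eq_zero n _ (by omega)
  rw [h2, zero_add]
  -- now ∑ x ∈ range (j+1), coeff (c + n - j - (x + (n-j))) = ∑ t, coeff (c - t)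
  apply Finset.sum_congr rfl
  intro x hx
  simp only [Finset.mem_range] at hx
  congr 1
  omega

lemma dq_two : dq 2 = X := by
  show (∑ i ∈ Finset.range 2, X ^ i) * dq 1 + (-1:ℤ[X]) ^ 2 * X ^ (Nat.choose 2 2) = X
  show (∑ i ∈ Finset.range 2, X ^ i) * 0 + (-1:ℤ[X]) ^ 2 * X ^ (Nat.choose 2 2) = X
  norm_num

lemma dq_three : dq 3 = X + X ^ 2 := by
  have : dq 3 = (∑ i ∈ Finset.range 3, X ^ i) * dq 2 + (-1:ℤ[X]) ^ 3 * X ^ (Nat.choose 3 2) := rfl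
  rw [this, dq_two]
  rw [Finset.sum_range_succ, Finset.sum_range_succ, Finset.sum_range_one]
  norm_num
  ring

lemma top3 : ∀ n, 3 ≤ n →
    (dq n).coeff (n.choose 2) = (if Even n then 1 else 0)
    ∧ (dq n).coeff (n.choose 2 - 1) = ((n : ℤ) - 1) / 2
    ∧ (dq n).coeff (n.choose 2 - 2) = (((n : ℤ) - 1) / 2) * ((n : ℤ) / 2) := by
  intro n hn
  induction n, hn using Nat.le_induction with
  | base =>
    rw [dq_three]
    norm_num [coeff_add, coeff_X_pow, coeff_X]
  | succ n hn ih =>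
    obtain ⟨h0, h1, h2⟩ := ih
    have hc := choose_two_ge n hn
    have hcs := choose_two_succ n
    have key : ∀ j ≤ 2, (dq (n+1)).coeff ((n+1).choose 2 - j)
        = (∑ t ∈ Finset.range (j+1), (dq n).coeff (n.choose 2 - t))
          + (-1:ℤ)^(n+1) * (if (n+1).choose 2 - j = (n+1).choose 2 then 1 else 0) := by
      intro j hj
      rw [dq_succ n (by omega), coeff_add]
      congr 1
      · rw [show (n+1).choose 2 - j = n.choose 2 + n - j by omega]
        exact aux_coeff n hn j hj
      · rw [show ((-1:ℤ[X])^(n+1)) = C ((-1:ℤ)^(n+1)) by simp, coeff_C_mul, coeff_X_pow]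
    have hsgn : (-1:ℤ)^(n+1) = if Even n then -1 else 1 := by
      rcases Nat.even_or_odd n with he | ho
      · rw [if_pos he, he.add_one.neg_one_pow]
      · rw [if_neg (Nat.not_even_iff_odd.mpr ho),
          ho.add_one.neg_one_pow]
    refine ⟨?_, ?_, ?_⟩
    · have := key 0 (by omega)
      rw [Nat.sub_zero] at this
      rw [this, Finset.sum_range_one, Nat.sub_zero, h0, if_pos rfl, mul_one, hsgn]
      rcases Nat.even_or_odd n with he | ho
      · simp [he, Nat.even_add_one]
      · simp [Nat.not_even_iff_odd.mpr ho, Nat.even_add_one, Nat.not_even_iff_odd, ho]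
    · rw [key 1 (by omega), Finset.sum_range_succ, Finset.sum_range_one, Nat.sub_zero,
        h0, h1, if_neg (show (n+1).choose 2 - 1 ≠ (n+1).choose 2 by omega), mul_zero, add_zero]
      rcases Nat.even_or_odd n with he | ho
      · obtain ⟨k, rfl⟩ := he
        rw [if_pos (show Even (k+k) from ⟨k, rfl⟩)]
        push_cast
        omega
      · obtain ⟨k, rfl⟩ := ho
        rw [if_neg (show ¬ Even (2*k+1) by simp [Nat.even_add_one, Nat.not_even_iff_odd])]
        push_cast
        omega
    · rw [key 2 (by omega), Finset.sum_range_succ, Finset.sum_range_succ, Finset.sum_range_one,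
        Nat.sub_zero, h0, h1, h2, if_neg (show (n+1).choose 2 - 2 ≠ (n+1).choose 2 by omega), mul_zero, add_zero]
      rcases Nat.even_or_odd n with he | ho
      · obtain ⟨k, rfl⟩ := he
        rw [if_pos (show Even (k+k) from ⟨k, rfl⟩)]
        have e1 : ((k + k : ℕ) - 1 : ℤ) / 2 = (k : ℤ) - 1 := by push_cast; omega
        have e2 : ((k + k : ℕ) : ℤ) / 2 = (k : ℤ) := by push_cast; omega
        have e3 : ((k + k + 1 : ℕ) - 1 : ℤ) / 2 = (k : ℤ) := by push_cast; omega
        have e4 : ((k + k + 1 : ℕ) : ℤ) / 2 = (k : ℤ) := by push_cast; omega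
        push_cast at e1 e2 e3 e4 ⊢
        rw [e1, e2, e3, e4]
        ring
      · obtain ⟨k, rfl⟩ := ho
        rw [if_neg (show ¬ Even (2*k+1) by simp [Nat.even_add_one, Nat.not_even_iff_odd])]
        have e1 : ((2 * k + 1 : ℕ) - 1 : ℤ) / 2 = (k : ℤ) := by push_cast; omega
        have e2 : ((2 * k + 1 : ℕ) : ℤ) / 2 = (k : ℤ) := by push_cast; omega
        have e3 : ((2 * k + 1 + 1 : ℕ) - 1 : ℤ) / 2 = (k : ℤ) := by push_cast; omega
        have e4 : ((2 * k + 1 + 1 : ℕ) : ℤ) / 2 = (k : ℤ) + 1 := by push_cast; omega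
        push_cast at e1 e2 e3 e4 ⊢
        rw [e1, e2, e3, e4]
        ring

theorem stmt_19 (n : ℕ) (hn : 6 ≤ n) (he : Even n) :
    (A n (n.choose 2) : ℚ) / (A n (n.choose 2 - 1) : ℚ) >
        (A n (n.choose 2 - 1) : ℚ) / (A n (n.choose 2 - 2) : ℚ) ∧
      A n (n.choose 2) * A n (n.choose 2 - 2) > A n (n.choose 2 - 1) ^ 2 := by
  obtain ⟨k, rfl⟩ := he
  have hk : 3 ≤ k := by omega
  obtain ⟨h0, h1, h2⟩ := top3 (k + k) (by omega)
  simp only [show Even (k + k) from ⟨k, rfl⟩, if_true] at h0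
  have e1 : (((k + k : ℕ) : ℤ) - 1) / 2 = (k : ℤ) - 1 := by push_cast; omega
  have e2 : ((k + k : ℕ) : ℤ) / 2 = (k : ℤ) := by push_cast; omega
  rw [e1] at h1
  rw [e1, e2] at h2
  have hA0 : A (k + k) ((k + k).choose 2) = 1 := h0
  have hA1 : A (k + k) ((k + k).choose 2 - 1) = (k : ℤ) - 1 := h1
  have hA2 : A (k + k) ((k + k).choose 2 - 2) = ((k : ℤ) - 1) * k := h2
  have hkQ : (3 : ℚ) ≤ (k : ℚ) := by exact_mod_cast hk
  constructor
  · rw [hA0, hA1, hA2]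
    push_cast
    rw [gt_iff_lt, div_lt_div_iff₀ (by nlinarith) (by nlinarith)]
    nlinarith
  · rw [hA0, hA1, hA2]
    have hkZ : (3 : ℤ) ≤ (k : ℤ) := by exact_mod_cast hk
    nlinarith
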